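/- Let Ω be a non-convex bounded polygonal domain with dual singular function p_s and let φ_s ∈ H¹_Δ(Ω) ∩ H¹₀(Ω) solve −Δφ_s = p_s. Let y be the very weak solution with data (f, u) and write y = Π_R y + α(y) p_s with α(y) ∈ ℝ. Then α(y) = (−(u, ∂ₙφ_s)_Γ + ⟨f, φ_s⟩) / ‖p_s‖²_{L²(Ω)}. -/
import Mathlib

open RealInnerProductSpace

/-- Abstract formulation.  `L2 = L²(Ω)`, `GΓ = L²(Γ)`;
`V = H¹_Δ(Ω) ∩ H¹₀(Ω)` with Laplacian `Lap`, normal derivative `N`, source functional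
`f`.  `p_s ≠ 0` is the dual singular function and `φ_s ∈ V` solves `−Δφ_s = p_s`.
`y` is the very weak solution with data `(f, u)` (hypothesis `hvw`), decomposed as
`y = Π_R y + α(y) p_s` with `Π_R y ⊥ p_s`.  Then
`α(y) = (−(u, ∂ₙφ_s)_Γ + ⟨f, φ_s⟩)/‖p_s‖²_{L²(Ω)}`. -/
theorem singular_coefficient_formula
    (L2 GΓ : Type*)
    [NormedAddCommGroup L2] [InnerProductSpace ℝ L2] [CompleteSpace L2]
    [NormedAddCommGroup GΓ] [InnerProductSpace ℝ GΓ] [CompleteSpace GΓ]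
    (V : Type*) [AddCommGroup V] [Module ℝ V]
    (Lap : V →ₗ[ℝ] L2) (N : V →ₗ[ℝ] GΓ) (f : V →ₗ[ℝ] ℝ)
    (ps : L2) (hps : ps ≠ 0) (φs : V) (hφs : Lap φs = -ps)
    (u : GΓ) (y yR : L2) (α : ℝ)
    (hdec : y = yR + α • ps) (horth : ⟪yR, ps⟫ = 0)
    (hvw : ∀ v : V, ⟪y, Lap v⟫ = ⟪u, N v⟫ - f v) :
    α = (-⟪u, N φs⟫ + f φs) / ‖ps‖ ^ 2 := by
  have h := hvw φs
  rw [hφs, inner_neg_right] at h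
  have hy : ⟪y, ps⟫ = α * ‖ps‖ ^ 2 := by
    rw [hdec, inner_add_left, horth, real_inner_smul_left,
      real_inner_self_eq_norm_sq]
    ring
  have hns : ‖ps‖ ^ 2 ≠ 0 := by
    simpa using (pow_ne_zero 2 (norm_ne_zero_iff.mpr hps))
  field_simp
  nlinarith [h, hy]
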